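/- arXiv:1412.7338 — 3 statements merged into one kernel-verified Lean document; each statement's English description precedes it below -/
import Mathlib

section
/- Let k, n be positive integers with 1 ≤ k ≤ n-1, and let 0 < |a| < 1 with |b|² = 1 - |a|². Then ∑_{γ=1}^{k} (-|b|²/|a|²)^{γ-1} · (1/γ) · C(k-1, γ-1) · C(n-k-1, γ-1) = (|a|^{-2(k-1)}/k) · P^{(1, n-2k)}_{k-1}(2|a|² - 1), where P^{(ν,μ)}_m denotes the Jacobi polynomial given by P^{(ν,μ)}_m(x) = (Γ(m+ν+1)/(Γ(m+1)Γ(ν+1))) · ₂F₁(-m, m+ν+μ+1; ν+1; (1-x)/2). -/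
open Real Finset

/-- Terminating Gauss hypergeometric series ₂F₁(-m, b; c; z). -/
noncomputable def hyp2F1term (m : ℕ) (b c z : ℝ) : ℝ :=
  ∑ j ∈ Finset.range (m + 1),
    ((ascPochhammer ℝ j).eval (-(m : ℝ)) * (ascPochhammer ℝ j).eval b) /
      ((ascPochhammer ℝ j).eval c * (j.factorial : ℝ)) * z ^ j

/-- Jacobi polynomial P^{(ν,μ)}_m(x) via the hypergeometric representation. -/
noncomputable def jacobiP (ν μ : ℝ) (m : ℕ) (x : ℝ) : ℝ :=
  (Real.Gamma ((m : ℝ) + ν + 1) / (Real.Gamma ((m : ℝ) + 1) * Real.Gamma (ν + 1))) *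
    hyp2F1term m ((m : ℝ) + ν + μ + 1) (ν + 1) ((1 - x) / 2)

/-! Auxiliary lemmas. -/

lemma vand (J p : ℕ) :
    ∑ j ∈ Finset.range (J+1), J.choose j * (p+1).choose (j+1) = (J+(p+1)).choose (J+1) := by
  rw [Nat.add_choose_eq, Finset.Nat.sum_antidiagonal_eq_sum_range_succ_mk]
  symm
  rw [Finset.sum_range_succ]
  simp only [Nat.choose_succ_self, Nat.zero_mul, add_zero]
  conv_lhs => rw [← Finset.sum_range_reflect]
  apply Finset.sum_congr rfl
  intro j hj
  simp only [Finset.mem_range, Nat.lt_succ_iff] at hj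
  have h1 : J + 1 - 1 - j = J - j := by omega
  have h2 : J + 1 - (J - j) = j + 1 := by omega
  rw [h1, h2, Nat.choose_symm hj]

lemma lemB (m p : ℕ) (x : ℝ) :
    ∑ j ∈ Finset.range (m+1), x^j * (1+x)^(m-j) * (m.choose j) * ((p+1).choose (j+1))
      = ∑ J ∈ Finset.range (m+1), x^J * (m.choose J) * ((J+(p+1)).choose (J+1)) := by
  have expand : ∀ j ∈ Finset.range (m+1),
      x^j * (1+x)^(m-j) * (m.choose j) * ((p+1).choose (j+1))
        = ∑ i ∈ Finset.range (m-j+1),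
            x^(j+i) * (m.choose j) * ((p+1).choose (j+1)) * ((m-j).choose i) := by
    intro j _
    rw [add_comm (1:ℝ) x, add_pow]
    simp only [one_pow, mul_one, Finset.mul_sum, Finset.sum_mul]
    apply Finset.sum_congr rfl
    intro i _
    rw [pow_add]
    ring
  rw [Finset.sum_congr rfl expand, Finset.sum_sigma']
  have vr : ∀ J ∈ Finset.range (m+1),
      x^J * (m.choose J) * ((J+(p+1)).choose (J+1))
        = ∑ j ∈ Finset.range (J+1),
            x^J * (m.choose j) * ((p+1).choose (j+1)) * ((m-j).choose (J-j)) := by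
    intro J hJ
    simp only [Finset.mem_range, Nat.lt_succ_iff] at hJ
    rw [← vand J p]
    push_cast
    rw [Finset.mul_sum]
    apply Finset.sum_congr rfl
    intro j hj
    simp only [Finset.mem_range, Nat.lt_succ_iff] at hj
    have key : m.choose J * J.choose j = m.choose j * (m-j).choose (J-j) :=
      Nat.choose_mul hj
    have keyR : (m.choose J : ℝ) * (J.choose j : ℝ)
        = (m.choose j : ℝ) * ((m-j).choose (J-j) : ℝ) := by exact_mod_cast key
    linear_combination (x^J * ((((p+1).choose (j+1)) : ℝ))) * keyR
  rw [Finset.sum_congr rfl vr, Finset.sum_sigma']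
  apply Finset.sum_nbij' (fun s => (⟨s.1 + s.2, s.1⟩ : (_ : ℕ) × ℕ))
    (fun s => (⟨s.2, s.1 - s.2⟩ : (_ : ℕ) × ℕ))
  · rintro ⟨j, i⟩ hs
    simp only [Finset.mem_sigma, Finset.mem_range, Nat.lt_succ_iff] at hs ⊢
    omega
  · rintro ⟨J, j⟩ hs
    simp only [Finset.mem_sigma, Finset.mem_range, Nat.lt_succ_iff] at hs ⊢
    omega
  · rintro ⟨j, i⟩ hs
    simp only [Finset.mem_sigma, Finset.mem_range, Nat.lt_succ_iff] at hs
    simp only [Sigma.mk.inj_iff, heq_eq_eq, true_and, and_true]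
    omega
  · rintro ⟨J, j⟩ hs
    simp only [Finset.mem_sigma, Finset.mem_range, Nat.lt_succ_iff] at hs
    simp only [Sigma.mk.inj_iff, heq_eq_eq, true_and, and_true]
    omega
  · rintro ⟨j, i⟩ hs
    simp only [Finset.mem_sigma, Finset.mem_range, Nat.lt_succ_iff] at hs
    simp only [Nat.add_sub_cancel_left]

lemma poch_neg (m : ℕ) :
    ∀ j : ℕ, (ascPochhammer ℝ j).eval (-(m:ℝ)) = (-1)^j * (m.descFactorial j : ℝ)
  | 0 => by simp
  | (j+1) => by
    rw [ascPochhammer_succ_eval, poch_neg m j, Nat.descFactorial_succ]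
    rcases le_or_gt j m with h | h
    · have hc : ((m - j : ℕ) : ℝ) = (m:ℝ) - j := by
        push_cast [h]; ring
      rw [Nat.cast_mul, hc]
      ring
    · rw [Nat.descFactorial_eq_zero_iff_lt.mpr h]
      simp

lemma poch_two (j : ℕ) : (ascPochhammer ℝ j).eval 2 = ((j+1).factorial : ℝ) := by
  rw [show (2:ℝ) = ((2:ℕ):ℝ) by norm_num, ← ascPochhammer_eval_cast,
    ascPochhammer_nat_eq_ascFactorial]
  norm_cast
  have h := Nat.factorial_mul_ascFactorial 1 j
  simpa [Nat.add_comm] using h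

lemma poch_b (p j : ℕ) : (ascPochhammer ℝ j).eval ((p:ℝ)+2)
    = ((p+1+j).factorial : ℝ) / ((p+1).factorial : ℝ) := by
  rw [show ((p:ℝ)+2) = (((p+2:ℕ)):ℝ) by push_cast; ring, ← ascPochhammer_eval_cast,
    ascPochhammer_nat_eq_ascFactorial]
  rw [eq_div_iff (by positivity)]
  norm_cast
  rw [mul_comm]
  exact Nat.factorial_mul_ascFactorial (p+1) j

lemma hyp_eval (m p : ℕ) (z : ℝ) :
    hyp2F1term m ((p:ℝ)+2) 2 (1-z)
      = (1/((p:ℝ)+1)) *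
        ∑ j ∈ Finset.range (m+1), (z-1)^j * (m.choose j) * ((j+(p+1)).choose (j+1)) := by
  unfold hyp2F1term
  rw [Finset.mul_sum]
  apply Finset.sum_congr rfl
  intro j _
  rw [poch_neg, poch_b, poch_two]
  have e1 : (m.descFactorial j : ℝ) = (j.factorial : ℝ) * (m.choose j : ℝ) := by
    exact_mod_cast congrArg (Nat.cast (R := ℝ)) (Nat.descFactorial_eq_factorial_mul_choose m j)
  have e2 : (((j+(p+1)).choose (j+1) : ℕ) : ℝ) * ((j+1).factorial : ℝ) * (p.factorial : ℝ)
      = ((p+1+j).factorial : ℝ) := by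
    have h := Nat.choose_mul_factorial_mul_factorial (show j+1 ≤ j+(p+1) by omega)
    rw [show j+(p+1)-(j+1) = p by omega] at h
    rw [show p+1+j = j+(p+1) by omega]
    exact_mod_cast congrArg (Nat.cast (R := ℝ)) h
  have e3 : ((p+1).factorial : ℝ) = ((p:ℝ)+1) * (p.factorial : ℝ) := by
    rw [Nat.factorial_succ]; push_cast; ring
  have e4 : (z-1)^j = (-1)^j * (1-z)^j := by
    rw [← mul_pow]; ring_nf
  rw [e1, ← e2, e3, e4]
  have f1 : (j.factorial : ℝ) ≠ 0 := by positivity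
  have f2 : ((j+1).factorial : ℝ) ≠ 0 := by positivity
  have f3 : (p.factorial : ℝ) ≠ 0 := by positivity
  have f4 : ((p:ℝ)+1) ≠ 0 := by positivity
  field_simp

lemma core (m p : ℕ) (z : ℝ) (hz : z ≠ 0) :
    ∑ j ∈ Finset.range (m+1), ((z-1)/z)^j * (m.choose j) * ((p+1).choose (j+1))
      = (z^m)⁻¹ * ∑ j ∈ Finset.range (m+1), (z-1)^j * (m.choose j) * ((j+(p+1)).choose (j+1)) := by
  rw [eq_inv_mul_iff_mul_eq₀ (pow_ne_zero m hz), Finset.mul_sum, ← lemB m p (z-1)]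
  apply Finset.sum_congr rfl
  intro j hj
  simp only [Finset.mem_range, Nat.lt_succ_iff] at hj
  rw [show (1:ℝ)+(z-1) = z by ring, div_pow]
  have h2 : z^m = z^(m-j) * z^j := by rw [← pow_add]; congr 1; omega
  rw [h2]
  have hzj : z^j ≠ 0 := pow_ne_zero _ hz
  field_simp

lemma main_id (m p : ℕ) (z : ℝ) (hz : z ≠ 0) :
    ∑ j ∈ Finset.range (m+1), (-(1-z)/z)^j * (1/((j:ℝ)+1)) * (m.choose j) * (p.choose j)
      = (z^m)⁻¹/((m:ℝ)+1) * jacobiP 1 ((p:ℝ)-(m:ℝ)) m (2*z-1) := by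
  unfold jacobiP
  have g1 : Real.Gamma ((m:ℝ)+1+1) = ((m+1).factorial : ℝ) := by
    rw [show (m:ℝ)+1+1 = ((m+1:ℕ):ℝ)+1 by push_cast; ring, Real.Gamma_nat_eq_factorial]
  have g2 : Real.Gamma ((m:ℝ)+1) = (m.factorial : ℝ) := Real.Gamma_nat_eq_factorial m
  have g3 : Real.Gamma ((1:ℝ)+1) = 1 := by
    rw [show ((1:ℝ)+1) = ((1:ℕ):ℝ)+1 by norm_num, Real.Gamma_nat_eq_factorial]
    simp
  rw [g1, g2, g3]
  rw [show (m:ℝ)+1+((p:ℝ)-(m:ℝ))+1 = (p:ℝ)+2 by ring]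
  rw [show (1-(2*z-1))/2 = 1-z by ring]
  rw [show ((1:ℝ)+1) = (2:ℝ) by norm_num]
  rw [hyp_eval]
  have hfac : ((m+1).factorial : ℝ) / ((m.factorial : ℝ) * 1) = (m:ℝ)+1 := by
    rw [Nat.factorial_succ]
    have : (m.factorial : ℝ) ≠ 0 := by positivity
    push_cast
    field_simp
  rw [hfac]
  have lhs_eq : ∀ j ∈ Finset.range (m+1),
      (-(1-z)/z)^j * (1/((j:ℝ)+1)) * (m.choose j) * (p.choose j)
        = (1/((p:ℝ)+1)) * (((z-1)/z)^j * (m.choose j) * ((p+1).choose (j+1))) := by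
    intro j _
    have hch : ((p:ℝ)+1) * (p.choose j : ℝ) = ((p+1).choose (j+1) : ℝ) * ((j:ℝ)+1) := by
      exact_mod_cast congrArg (Nat.cast (R := ℝ)) (Nat.add_one_mul_choose_eq p j)
    have h1 : (-(1-z)/z)^j = ((z-1)/z)^j := by
      congr 1; ring
    have f1 : ((j:ℝ)+1) ≠ 0 := by positivity
    have f2 : ((p:ℝ)+1) ≠ 0 := by positivity
    have hdiv : (p.choose j : ℝ)/((j:ℝ)+1) = ((p+1).choose (j+1) : ℝ)/((p:ℝ)+1) := by
      rw [div_eq_div_iff f1 f2]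
      linear_combination hch
    have h2 : (-(1-z)/z)^j * (1/((j:ℝ)+1)) * (m.choose j : ℝ) * (p.choose j : ℝ)
        = ((z-1)/z)^j * (m.choose j : ℝ) * ((p.choose j : ℝ)/((j:ℝ)+1)) := by
      rw [h1]; ring
    rw [h2, hdiv]
    ring
  rw [Finset.sum_congr rfl lhs_eq, ← Finset.mul_sum, core m p z hz]
  have hm : ((m:ℝ)+1) ≠ 0 := by positivity
  have hp : ((p:ℝ)+1) ≠ 0 := by positivity
  field_simp

theorem jacobi_sum_identity_one
    (a : ℝ) (ha0 : 0 < a) (ha1 : a < 1)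
    (k n : ℕ) (hk : 1 ≤ k) (hkn : k ≤ n - 1) (hn : 1 ≤ n) :
    ∑ γ ∈ Finset.Icc 1 k,
        (-(1 - a ^ 2) / a ^ 2) ^ (γ - 1) * (1 / (γ : ℝ)) *
          ((k - 1).choose (γ - 1) : ℝ) * ((n - k - 1).choose (γ - 1) : ℝ)
      = (a ^ (2 * (k - 1)))⁻¹ / (k : ℝ) *
          jacobiP 1 ((n : ℝ) - 2 * (k : ℝ)) (k - 1) (2 * a ^ 2 - 1) := by
  obtain ⟨m, rfl⟩ : ∃ m, k = m + 1 := ⟨k - 1, by omega⟩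
  obtain ⟨p, rfl⟩ : ∃ p, n = m + p + 2 := ⟨n - (m+1) - 1, by omega⟩
  have e1 : m + 1 - 1 = m := by omega
  have e2 : m + p + 2 - (m+1) - 1 = p := by omega
  rw [e1, e2]
  have e3 : ((m+p+2 : ℕ):ℝ) - 2*(((m+1):ℕ):ℝ) = (p:ℝ)-(m:ℝ) := by push_cast; ring
  have e4 : ((m+1:ℕ):ℝ) = (m:ℝ)+1 := by push_cast; ring
  rw [e3, e4, pow_mul]
  have hz : a^2 ≠ 0 := pow_ne_zero 2 ha0.ne'
  rw [← Finset.Ico_add_one_right_eq_Icc, Finset.sum_Ico_eq_sum_range]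
  have e5 : m + 1 + 1 - 1 = m + 1 := by omega
  rw [e5]
  have term_eq : ∀ j ∈ Finset.range (m+1),
      (-(1 - a ^ 2) / a ^ 2) ^ (1+j - 1) * (1 / ((1+j : ℕ) : ℝ)) *
          (m.choose (1+j - 1) : ℝ) * (p.choose (1+j - 1) : ℝ)
        = (-(1 - a^2)/a^2)^j * (1/((j:ℝ)+1)) * (m.choose j) * (p.choose j) := by
    intro j _
    have h6 : 1 + j - 1 = j := by omega
    rw [h6]
    norm_num [add_comm]
  rw [Finset.sum_congr rfl term_eq]
  exact main_id m p (a^2) hz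
end

section
/- For the discrete-time quantum walk on ℤ with coin U = [[a,b],[c,d]] ∈ U(2) and initial state φ = α|L⟩ + β|R⟩ (|α|² + |β|² = 1) starting from the origin, the probability of being at position n at time n is P_n^φ(n) = |a|^{2(n-1)} · (|b|²|α|² + |a|²|β|² - (aα·conj(bβ) + conj(aα)·bβ)) for n ≥ 1. -/
open Matrix Complex

lemma qpow_formula (c d : ℂ) (k : ℕ) :
    (!![(0:ℂ), 0; c, d]) ^ (k+1) = !![(0:ℂ), 0; d^k * c, d^(k+1)] := by
  induction k with
  | zero => simp [pow_one]
  | succ k ih =>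
      rw [pow_succ, ih]
      ext i j
      fin_cases i <;> fin_cases j <;>
        simp [Matrix.mul_apply, Fin.sum_univ_two, pow_succ] <;> ring

theorem dtqw_prob_rightmost
    (a b c d α β : ℂ)
    (hU : (!![a, b; c, d] : Matrix (Fin 2) (Fin 2) ℂ) * (!![a, b; c, d])ᴴ = 1)
    (hφ : ‖α‖ ^ 2 + ‖β‖ ^ 2 = 1)
    (n : ℕ) (hn : 1 ≤ n) :
    ∑ i, ‖
        ((((!![(0 : ℂ), 0; c, d] : Matrix (Fin 2) (Fin 2) ℂ) ^ n).mulVec ![α, β]) i)‖ ^ 2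
      = ‖a‖ ^ (2 * (n - 1)) *
          (‖b‖ ^ 2 * ‖α‖ ^ 2 + ‖a‖ ^ 2 * ‖β‖ ^ 2
            - (a * α * (starRingEnd ℂ) (b * β) + (starRingEnd ℂ) (a * α) * (b * β)).re) := by
  obtain ⟨k, rfl⟩ : ∃ k, n = k + 1 := ⟨n - 1, (Nat.succ_pred_eq_of_pos hn).symm⟩
  have hU' : (!![a, b; c, d] : Matrix (Fin 2) (Fin 2) ℂ)ᴴ * !![a, b; c, d] = 1 :=
    mul_eq_one_comm.mp hU
  have e1 : (starRingEnd ℂ) a * a + (starRingEnd ℂ) c * c = 1 := by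
    have := congrFun (congrFun hU' 0) 0
    simpa [Matrix.mul_apply, Fin.sum_univ_two, Matrix.one_apply] using this
  have e2 : (starRingEnd ℂ) a * b + (starRingEnd ℂ) c * d = 0 := by
    have := congrFun (congrFun hU' 0) 1
    simpa [Matrix.mul_apply, Fin.sum_univ_two, Matrix.one_apply] using this
  have e4 : (starRingEnd ℂ) b * b + (starRingEnd ℂ) d * d = 1 := by
    have := congrFun (congrFun hU' 1) 1
    simpa [Matrix.mul_apply, Fin.sum_univ_two, Matrix.one_apply] using this
  have r1 : a * (starRingEnd ℂ) a + b * (starRingEnd ℂ) b = 1 := by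
    have := congrFun (congrFun hU 0) 0
    simpa [Matrix.mul_apply, Fin.sum_univ_two, Matrix.conjTranspose_apply, Matrix.one_apply]
      using this
  have e2c : a * (starRingEnd ℂ) b + c * (starRingEnd ℂ) d = 0 := by
    have := congrArg (starRingEnd ℂ) e2
    simpa [map_add, _root_.map_mul] using this
  have hdd : d * (starRingEnd ℂ) d = a * (starRingEnd ℂ) a := by
    linear_combination e4 - r1 + e1 - e1
  have habs : ‖d‖ = ‖a‖ := by
    have h1 : (Complex.normSq d : ℂ) = (Complex.normSq a : ℂ) := by
      rw [← Complex.mul_conj, ← Complex.mul_conj]; exact hdd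
    have h2 : Complex.normSq d = Complex.normSq a := by exact_mod_cast h1
    rw [Complex.norm_def, Complex.norm_def, h2]
  have hc : (c * α + d * β) * (starRingEnd ℂ) (c * α + d * β)
      = b * (starRingEnd ℂ) b * (α * (starRingEnd ℂ) α)
        + a * (starRingEnd ℂ) a * (β * (starRingEnd ℂ) β)
        - (a * α * (starRingEnd ℂ) (b * β) + (starRingEnd ℂ) (a * α) * (b * β)) := by
    simp only [map_add, _root_.map_mul]
    linear_combination (α * (starRingEnd ℂ) α) * (e1 - r1)
      + (β * (starRingEnd ℂ) β) * hdd
      + (α * (starRingEnd ℂ) β) * e2c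
      + ((starRingEnd ℂ) α * β) * e2
  have key : ‖c * α + d * β‖ ^ 2
      = ‖b‖ ^ 2 * ‖α‖ ^ 2 + ‖a‖ ^ 2 * ‖β‖ ^ 2
        - (a * α * (starRingEnd ℂ) (b * β) + (starRingEnd ℂ) (a * α) * (b * β)).re := by
    rw [Complex.mul_conj, Complex.mul_conj, Complex.mul_conj, Complex.mul_conj] at hc
    have := congrArg Complex.re hc
    simp [Complex.sq_norm, ← Complex.ofReal_mul, Complex.normSq_apply] at this ⊢; linarith
  rw [qpow_formula]
  have hv : (!![(0:ℂ), 0; d^k * c, d^(k+1)]).mulVec ![α, β]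
      = ![0, d^k * (c * α + d * β)] := by
    ext i
    fin_cases i <;> simp [Matrix.mulVec, dotProduct, Fin.sum_univ_two] <;> ring
  rw [hv, Fin.sum_univ_two]
  simp only [Matrix.cons_val_zero, Matrix.cons_val_one, Matrix.head_cons, map_zero, norm_zero]
  rw [Nat.add_sub_cancel, norm_mul, norm_pow, habs, mul_pow, key]
  ring
end

section
/- The function f(x) = (|b| / (π(1-x²)√(|a|² - x²))) · (1 - c·x), restricted to (-|a|, |a|) with |a|² + |b|² = 1, 0 < |a| < 1, and constant c = |α|² - |β|² + (aα·conj(bβ) + conj(aα)·bβ)/|a|², is a probability density: ∫_{-|a|}^{|a|} f(x) dx = 1. -/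
open Real MeasureTheory Set Filter Topology

lemma konno_hasDeriv (r : ℝ) (h0 : 0 < r) (h1 : r < 1) {x : ℝ} (hx : x ∈ Set.Ioo (-r) r) :
    HasDerivAt (fun y => (1 / Real.sqrt (1 - r^2)) * Real.arctan
        (Real.sqrt (1 - r^2) * y / Real.sqrt (r^2 - y^2)))
      (1 / ((1 - x^2) * Real.sqrt (r^2 - x^2))) x := by
  obtain ⟨hx1, hx2⟩ := hx
  have hk2 : (0:ℝ) < 1 - r^2 := by nlinarith
  have hk : 0 < Real.sqrt (1 - r^2) := Real.sqrt_pos.2 hk2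
  have hs2 : (0:ℝ) < r^2 - x^2 := by nlinarith
  have hs : 0 < Real.sqrt (r^2 - x^2) := Real.sqrt_pos.2 hs2
  set k := Real.sqrt (1 - r^2) with hkdef
  set s := Real.sqrt (r^2 - x^2) with hsdef
  have hksq : k^2 = 1 - r^2 := Real.sq_sqrt hk2.le
  have hssq : s^2 = r^2 - x^2 := Real.sq_sqrt hs2.le
  have hinner : HasDerivAt (fun y : ℝ => r^2 - y^2) (-(2*x)) x := by
    simpa using ((hasDerivAt_pow 2 x).const_sub (r^2))
  have hsqrt : HasDerivAt (fun y : ℝ => Real.sqrt (r^2 - y^2)) (-(2*x) / (2*s)) x :=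
    hinner.sqrt (by positivity)
  have hnum : HasDerivAt (fun y : ℝ => k * y) k x := by
    simpa using (hasDerivAt_id x).const_mul k
  have hu : HasDerivAt (fun y : ℝ => k * y / Real.sqrt (r^2 - y^2))
      ((k * s - (k * x) * (-(2*x)/(2*s))) / s^2) x := hnum.div hsqrt hs.ne'
  have harctan := (Real.hasDerivAt_arctan (k * x / s)).comp x hu
  have := harctan.const_mul (1 / k)
  refine this.congr_deriv ?_
  symm
  have h1x : (0:ℝ) < 1 - x^2 := by nlinarith
  field_simp
  linear_combination x^2 * hksq + x^2 * hssq

lemma konno_g_cont (r : ℝ) (h0 : 0 < r) (h1 : r < 1) :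
    ContinuousOn (fun x => 1 / ((1 - x^2) * Real.sqrt (r^2 - x^2))) (Set.Ioo (-r) r) := by
  apply ContinuousOn.div continuousOn_const
  · exact ((continuousOn_const.sub ((continuous_pow 2).continuousOn)).mul
      ((continuous_const.sub (continuous_pow 2)).continuousOn.sqrt))
  · intro x hx
    obtain ⟨hx1, hx2⟩ := hx
    have h1x : (0:ℝ) < 1 - x^2 := by nlinarith
    have hs2 : (0:ℝ) < r^2 - x^2 := by nlinarith
    positivity

lemma konno_g_integrable (r : ℝ) (h0 : 0 < r) (h1 : r < 1) :
    IntegrableOn (fun x => 1 / ((1 - x^2) * Real.sqrt (r^2 - x^2))) (Set.Ioo (-r) r) := by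
  have hk2 : (0:ℝ) < 1 - r^2 := by nlinarith
  have hC : (0:ℝ) < 1 / ((1 - r^2) * Real.sqrt r) := by positivity
  -- majorant
  have hbase : IntervalIntegrable (fun x : ℝ => x ^ (-(1/2) : ℝ)) volume 0 (2*r) :=
    intervalIntegral.intervalIntegrable_rpow' (by norm_num)
  have hm1 : IntervalIntegrable (fun x : ℝ => (r - x) ^ (-(1/2) : ℝ)) volume (-r) r := by
    have := (hbase.comp_sub_left r).symm
    simpa [show r - 2*r = -r by ring] using this
  have hm2 : IntervalIntegrable (fun x : ℝ => (r + x) ^ (-(1/2) : ℝ)) volume (-r) r := by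
    have := hbase.comp_add_left r
    simpa [show (2:ℝ)*r - r = r by ring, show (0:ℝ) - r = -r by ring, add_comm] using this
  have hm : IntervalIntegrable
      (fun x : ℝ => 1 / ((1 - r^2) * Real.sqrt r) *
        ((r - x) ^ (-(1/2) : ℝ) + (r + x) ^ (-(1/2) : ℝ))) volume (-r) r :=
    (hm1.add hm2).const_mul _
  have hmIoo : IntegrableOn
      (fun x : ℝ => 1 / ((1 - r^2) * Real.sqrt r) *
        ((r - x) ^ (-(1/2) : ℝ) + (r + x) ^ (-(1/2) : ℝ))) (Set.Ioo (-r) r) := by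
    have h := hm.1
    exact h.mono_set Set.Ioo_subset_Ioc_self
  refine MeasureTheory.Integrable.mono hmIoo ((konno_g_cont r h0 h1).aestronglyMeasurable measurableSet_Ioo) ?_
  rw [ae_restrict_iff' measurableSet_Ioo]
  refine ae_of_all _ fun x hx => ?_
  obtain ⟨hx1, hx2⟩ := hx
  have h1x : (0:ℝ) < 1 - x^2 := by nlinarith
  have hrx1 : (0:ℝ) < r - x := by linarith
  have hrx2 : (0:ℝ) < r + x := by linarith
  have hs2 : (0:ℝ) < r^2 - x^2 := by nlinarith
  set A := Real.sqrt (r - x) with hA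
  set B := Real.sqrt (r + x) with hB
  have hApos : 0 < A := Real.sqrt_pos.2 hrx1
  have hBpos : 0 < B := Real.sqrt_pos.2 hrx2
  have hAB : Real.sqrt (r^2 - x^2) = A * B := by
    rw [hA, hB, ← Real.sqrt_mul hrx1.le]
    congr 1; ring
  have hA2 : A^2 = r - x := Real.sq_sqrt hrx1.le
  have hB2 : B^2 = r + x := Real.sq_sqrt hrx2.le
  have hrw1 : (r - x) ^ (-(1/2) : ℝ) = A⁻¹ := by
    rw [Real.rpow_neg hrx1.le, hA, Real.sqrt_eq_rpow]
  have hrw2 : (r + x) ^ (-(1/2) : ℝ) = B⁻¹ := by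
    rw [Real.rpow_neg hrx2.le, hB, Real.sqrt_eq_rpow]
  have hsr : Real.sqrt r ≤ A + B := by
    have h := Real.sq_sqrt h0.le
    have h2 := Real.sqrt_nonneg r
    nlinarith [mul_pos hApos hBpos]
  have hgpos : 0 < 1 / ((1 - x^2) * Real.sqrt (r^2 - x^2)) := by positivity
  rw [Real.norm_eq_abs, abs_of_pos hgpos, norm_mul, norm_div]
  rw [hrw1, hrw2, hAB]
  have hre : ‖(1:ℝ)‖ / ‖(1 - r^2) * Real.sqrt r‖ = 1 / ((1 - r^2) * Real.sqrt r) := by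
    rw [norm_one, Real.norm_eq_abs, abs_of_pos (by positivity)]
  rw [hre, Real.norm_eq_abs, abs_of_pos (by positivity)]
  have hstep : A⁻¹ + B⁻¹ = (A + B) / (A * B) := by field_simp; ring
  rw [hstep]
  rw [div_mul_div_comm, one_mul, div_le_div_iff₀ (by positivity) (by positivity)]
  have hsrpos : 0 < Real.sqrt r := Real.sqrt_pos.2 h0
  nlinarith [mul_pos hApos hBpos, mul_pos (mul_pos hApos hBpos) hsrpos,
    mul_le_mul_of_nonneg_right hsr (mul_pos hApos hBpos).le,
    mul_le_mul_of_nonneg_left (show 1 - r^2 ≤ 1 - x^2 by nlinarith)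
      (mul_pos (mul_pos hApos hBpos) hsrpos).le]

lemma konno_g_integral (r : ℝ) (h0 : 0 < r) (h1 : r < 1) :
    ∫ x in Set.Ioo (-r) r, 1 / ((1 - x^2) * Real.sqrt (r^2 - x^2))
      = Real.pi / Real.sqrt (1 - r^2) := by
  have hk2 : (0:ℝ) < 1 - r^2 := by nlinarith
  have hk : 0 < Real.sqrt (1 - r^2) := Real.sqrt_pos.2 hk2
  set k := Real.sqrt (1 - r^2) with hkdef
  set g : ℝ → ℝ := fun x => 1 / ((1 - x^2) * Real.sqrt (r^2 - x^2)) with hgdef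
  set F : ℝ → ℝ := fun y => (1 / k) * Real.arctan (k * y / Real.sqrt (r^2 - y^2)) with hFdef
  set c : ℕ → ℝ := fun n => r - r / (n + 1) with hcdef
  have hc0 : ∀ n : ℕ, 0 ≤ c n := by
    intro n
    have h2 : r / (n + 1) ≤ r := by
      rw [div_le_iff₀ (by positivity)]
      nlinarith [Nat.cast_nonneg (α := ℝ) n]
    simpa [hcdef] using sub_nonneg.2 h2
  have hcr : ∀ n : ℕ, c n < r := by
    intro n
    have : 0 < r / (n + 1) := by positivity
    simp only [hcdef]; linarith
  have hcm : Monotone c := by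
    intro m n hmn
    have : r / (n + 1) ≤ r / (m + 1) := by
      apply div_le_div_of_nonneg_left h0.le (by positivity)
      exact_mod_cast by omega
    simp only [hcdef]; linarith
  have hctend : Tendsto c atTop (𝓝 r) := by
    have h2 : Tendsto (fun n : ℕ => r / (n + 1)) atTop (𝓝 0) := by
      apply Tendsto.div_atTop (tendsto_const_nhds (x := r))
      exact tendsto_atTop_add_const_right _ _ tendsto_natCast_atTop_atTop
    simpa using (tendsto_const_nhds (x := r)).sub h2
  set s : ℕ → Set ℝ := fun n => Set.Ioo (-(c n)) (c n) with hsdef2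
  have hsm : ∀ n, MeasurableSet (s n) := fun n => measurableSet_Ioo
  have hmono : Monotone s := fun m n hmn =>
    Set.Ioo_subset_Ioo (neg_le_neg (hcm hmn)) (hcm hmn)
  have hunion : (⋃ n, s n) = Set.Ioo (-r) r := by
    ext x
    simp only [hsdef2, Set.mem_iUnion, Set.mem_Ioo]
    constructor
    · rintro ⟨n, h1', h2'⟩
      have := hcr n
      exact ⟨by linarith, by linarith⟩
    · rintro ⟨hx1, hx2⟩
      have hmax : |x| < r := abs_lt.2 ⟨hx1, hx2⟩
      obtain ⟨n, hn⟩ := exists_nat_gt (r / (r - |x|))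
      have hpos : 0 < r - |x| := by linarith
      have hlt : r / ((n:ℝ) + 1) < r - |x| := by
        rw [div_lt_iff₀ (by positivity)]
        nlinarith [(div_lt_iff₀ hpos).mp hn, hpos]
      have habs : |x| < c n := by simp only [hcdef]; linarith
      exact ⟨n, (abs_lt.1 habs).1, (abs_lt.1 habs).2⟩
  have hgint : IntegrableOn g (Set.Ioo (-r) r) := konno_g_integrable r h0 h1
  -- limit of set integrals
  have T1 : Tendsto (fun n => ∫ x in s n, g x) atTop (𝓝 (∫ x in Set.Ioo (-r) r, g x)) := by
    have := tendsto_setIntegral_of_monotone hsm hmono (hunion ▸ hgint)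
    rwa [hunion] at this
  -- each set integral equals F (c n) - F (-(c n))
  have hval : ∀ n, ∫ x in s n, g x = F (c n) - F (-(c n)) := by
    intro n
    have hle : -(c n) ≤ c n := by linarith [hc0 n]
    have hsub : Set.uIcc (-(c n)) (c n) ⊆ Set.Ioo (-r) r := by
      rw [Set.uIcc_of_le hle]
      intro y hy
      exact ⟨lt_of_lt_of_le (neg_lt_neg (hcr n)) hy.1, lt_of_le_of_lt hy.2 (hcr n)⟩
    have hderiv : ∀ y ∈ Set.uIcc (-(c n)) (c n), HasDerivAt F (g y) y :=
      fun y hy => konno_hasDeriv r h0 h1 (hsub hy)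
    have hint : IntervalIntegrable g volume (-(c n)) (c n) := by
      apply ContinuousOn.intervalIntegrable
      exact (konno_g_cont r h0 h1).mono hsub
    have := intervalIntegral.integral_eq_sub_of_hasDerivAt hderiv hint
    rw [← this, intervalIntegral.integral_of_le hle, integral_Ioc_eq_integral_Ioo]
  -- limit of F (c n) - F (-(c n))
  have hFodd : ∀ y : ℝ, F (-y) = -F y := by
    intro y
    simp only [hFdef, neg_sq, mul_neg, neg_div, Real.arctan_neg, mul_neg]
  have hinner : Tendsto (fun n => k * c n / Real.sqrt (r^2 - (c n)^2)) atTop atTop := by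
    have hnum : Tendsto (fun n => k * c n) atTop (𝓝 (k * r)) :=
      (tendsto_const_nhds).mul hctend
    have hden : Tendsto (fun n => (Real.sqrt (r^2 - (c n)^2))⁻¹) atTop atTop := by
      apply Filter.Tendsto.inv_tendsto_nhdsGT_zero
      rw [tendsto_nhdsWithin_iff]
      constructor
      · have h2 : Tendsto (fun n => r^2 - (c n)^2) atTop (𝓝 0) := by
          have := ((tendsto_const_nhds (x := r^2)).sub (hctend.pow 2))
          simpa using this
        have := (Real.continuous_sqrt.tendsto 0).comp h2
        simpa [Function.comp_def] using this
      · refine Eventually.of_forall fun n => ?_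
        have h2 : (c n)^2 < r^2 := by nlinarith [hc0 n, hcr n]
        have : (0:ℝ) < r^2 - (c n)^2 := by linarith
        exact Set.mem_Ioi.2 (Real.sqrt_pos.2 this)
    have := Filter.Tendsto.pos_mul_atTop (by positivity : (0:ℝ) < k * r) hnum hden
    simpa [div_eq_mul_inv] using this
  have T2 : Tendsto (fun n => F (c n) - F (-(c n))) atTop (𝓝 (Real.pi / k)) := by
    have harct : Tendsto (fun n => Real.arctan (k * c n / Real.sqrt (r^2 - (c n)^2)))
        atTop (𝓝 (Real.pi / 2)) :=
      (Real.tendsto_arctan_atTop.mono_right nhdsWithin_le_nhds).comp hinner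
    have hF : Tendsto (fun n => F (c n)) atTop (𝓝 ((1/k) * (Real.pi / 2))) :=
      harct.const_mul (1/k)
    have heq : (fun n => F (c n) - F (-(c n))) = fun n => 2 * F (c n) := by
      funext n; rw [hFodd]; ring
    rw [heq]
    have h2F := hF.const_mul 2
    convert h2F using 2
    field_simp
  have T2' : Tendsto (fun n => ∫ x in s n, g x) atTop (𝓝 (Real.pi / k)) := by
    simp only [hval]; exact T2
  exact tendsto_nhds_unique T1 T2'

lemma konno_odd_integrable (r : ℝ) (h0 : 0 < r) (h1 : r < 1) :
    IntegrableOn (fun x => x * (1 / ((1 - x^2) * Real.sqrt (r^2 - x^2)))) (Set.Ioo (-r) r) := by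
  have hg := konno_g_integrable r h0 h1
  refine MeasureTheory.Integrable.mono (hg.const_mul r)
    ((continuousOn_id.mul (konno_g_cont r h0 h1)).aestronglyMeasurable measurableSet_Ioo) ?_
  rw [ae_restrict_iff' measurableSet_Ioo]
  refine ae_of_all _ fun x hx => ?_
  obtain ⟨hx1, hx2⟩ := hx
  have h1x : (0:ℝ) < 1 - x^2 := by nlinarith
  have hs2 : (0:ℝ) < r^2 - x^2 := by nlinarith
  have hgpos : 0 < 1 / ((1 - x^2) * Real.sqrt (r^2 - x^2)) := by positivity
  have hxle : |x| ≤ r := by rw [abs_le]; constructor <;> linarith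
  calc ‖x * (1 / ((1 - x^2) * Real.sqrt (r^2 - x^2)))‖
      = |x| * (1 / ((1 - x^2) * Real.sqrt (r^2 - x^2))) := by
        rw [norm_mul, Real.norm_eq_abs, Real.norm_eq_abs, abs_of_pos hgpos]
    _ ≤ r * (1 / ((1 - x^2) * Real.sqrt (r^2 - x^2))) :=
        mul_le_mul_of_nonneg_right hxle hgpos.le
    _ = ‖r * (1 / ((1 - x^2) * Real.sqrt (r^2 - x^2)))‖ := by
        rw [Real.norm_eq_abs, abs_of_pos (mul_pos h0 hgpos)]

lemma konno_odd_integral (r : ℝ) (h0 : 0 < r) (h1 : r < 1) :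
    ∫ x in Set.Ioo (-r) r, x * (1 / ((1 - x^2) * Real.sqrt (r^2 - x^2))) = 0 := by
  set h : ℝ → ℝ := fun x => x * (1 / ((1 - x^2) * Real.sqrt (r^2 - x^2))) with hhdef
  have hIoo : ∫ x in Set.Ioo (-r) r, h x = ∫ x in (-r)..r, h x := by
    rw [intervalIntegral.integral_of_le (by linarith), integral_Ioc_eq_integral_Ioo]
  have hneg : ∀ x, h (-x) = -h x := by
    intro x; simp only [hhdef, neg_sq]; ring
  have h2 : ∫ x in (-r)..r, h (-x) = ∫ x in (-r)..r, h x := by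
    rw [intervalIntegral.integral_comp_neg]
    norm_num
  have h3 : ∫ x in (-r)..r, h (-x) = -∫ x in (-r)..r, h x := by
    simp only [hneg]
    exact intervalIntegral.integral_neg
  rw [hIoo]
  have := h2.symm.trans h3
  linarith

theorem konno_density_integral_one
    (a b α β : ℂ)
    (hab : ‖a‖ ^ 2 + ‖b‖ ^ 2 = 1)
    (ha0 : 0 < ‖a‖) (ha1 : ‖a‖ < 1)
    (habne : a * b ≠ 0)
    (hφ : ‖α‖ ^ 2 + ‖β‖ ^ 2 = 1) :
    ∫ x in Set.Ioo (-(‖a‖)) (‖a‖),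
        ‖b‖ *
          (1 - (‖α‖ ^ 2 - ‖β‖ ^ 2 +
            (a * α * (starRingEnd ℂ) (b * β) + (starRingEnd ℂ) (a * α) * (b * β)).re
              / ‖a‖ ^ 2) * x) /
        (Real.pi * (1 - x ^ 2) * Real.sqrt (‖a‖ ^ 2 - x ^ 2)) = 1 := by
  have hb0 : b ≠ 0 := fun h => habne (by rw [h, mul_zero])
  have hbpos : 0 < ‖b‖ := norm_pos_iff.2 hb0
  set r := ‖a‖ with hr
  have hbeq : ‖b‖ = Real.sqrt (1 - r^2) := by
    rw [← Real.sqrt_sq hbpos.le]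
    congr 1
    linarith
  set C : ℝ := ‖α‖ ^ 2 - ‖β‖ ^ 2 +
      (a * α * (starRingEnd ℂ) (b * β) + (starRingEnd ℂ) (a * α) * (b * β)).re / r ^ 2 with hC
  have hgint := konno_g_integrable r ha0 ha1
  have hoint := konno_odd_integrable r ha0 ha1
  have hcongr : Set.EqOn
      (fun x => ‖b‖ * (1 - C * x) / (Real.pi * (1 - x^2) * Real.sqrt (r^2 - x^2)))
      (fun x => (‖b‖ / Real.pi) * (1 / ((1 - x^2) * Real.sqrt (r^2 - x^2)))
        + (-(‖b‖ * C / Real.pi)) * (x * (1 / ((1 - x^2) * Real.sqrt (r^2 - x^2)))))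
      (Set.Ioo (-r) r) := by
    intro x hx
    obtain ⟨hx1, hx2⟩ := hx
    have h1x : (0:ℝ) < 1 - x^2 := by nlinarith
    have hs : 0 < Real.sqrt (r^2 - x^2) := Real.sqrt_pos.2 (by nlinarith)
    have hpi := Real.pi_pos
    simp only
    field_simp
    ring
  rw [MeasureTheory.setIntegral_congr_fun measurableSet_Ioo hcongr,
    MeasureTheory.integral_add (hgint.const_mul _) (hoint.const_mul _),
    MeasureTheory.integral_const_mul, MeasureTheory.integral_const_mul,
    konno_g_integral r ha0 ha1, konno_odd_integral r ha0 ha1]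
  rw [← hbeq]
  have hpi := Real.pi_pos
  field_simp
  ring
end
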